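/- Quantum advantage in hypothesis testing (Proposition 1, strictness part): let ρ₀ = [[1,0],[0,0]] and σ₁ = (1/2)[[1,1],[1,1]] be 2×2 Hermitian positive semidefinite matrices of trace 1. For any ε ∈ (0, 4/5), the matrix A' = [[1-ε, -√(ε(1-ε))],[-√(ε(1-ε)), ε]] satisfies 0 ⪯ A' ⪯ I, Tr(ρ₀ A') = 1-ε ≥ 1-ε, and Tr(σ₁ A') = (1/2)(1 - 2√(ε(1-ε))) < (1/2)(1-ε). Consequently ξ_H^ε(ρ₀‖σ₁) < (1-ε)/2, strictly beating the classical bound achievable when the alternative is the diagonal mixture (1/2)I. -/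

import Mathlib

open Matrix
open scoped ComplexOrder

/-- Quantum one-shot hypothesis testing quantity for 2×2 states. -/
noncomputable def xiQ2 (ε : ℝ) (ρ σ : Matrix (Fin 2) (Fin 2) ℂ) : ℝ :=
  sInf {r : ℝ | ∃ A : Matrix (Fin 2) (Fin 2) ℂ, A.PosSemidef ∧ (1 - A).PosSemidef ∧
    1 - ε ≤ (ρ * A).trace.re ∧ r = (σ * A).trace.re}

/-- quantum advantage in hypothesis testing (Proposition 1,
strictness part). For `ρ₀ = |0⟩⟨0|` and `σ₁ = |+⟩⟨+|` and any `ε ∈ (0, 4/5)`,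
the test `A' = [[1-ε, -√(ε(1-ε))],[-√(ε(1-ε)), ε]]` is a valid quantum decision
function with `Tr(ρ₀A') = 1-ε` and `Tr(σ₁A') = (1/2)(1 - 2√(ε(1-ε))) < (1/2)(1-ε)`,
whence `ξ_H^ε(ρ₀‖σ₁) < (1-ε)/2`. -/
theorem quantum_advantage (ε : ℝ) (hε : ε ∈ Set.Ioo (0:ℝ) (4/5)) :
    letI ρ₀ : Matrix (Fin 2) (Fin 2) ℂ := !![1, 0; 0, 0]
    letI σ₁ : Matrix (Fin 2) (Fin 2) ℂ := (1/2 : ℂ) • !![1, 1; 1, 1]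
    letI s : ℝ := Real.sqrt (ε * (1 - ε))
    letI A' : Matrix (Fin 2) (Fin 2) ℂ := !![(1 - ε : ℝ), (-s : ℝ); (-s : ℝ), (ε : ℝ)]
    A'.PosSemidef ∧ (1 - A').PosSemidef ∧
    (ρ₀ * A').trace.re = 1 - ε ∧
    (σ₁ * A').trace.re = (1/2) * (1 - 2 * s) ∧
    (σ₁ * A').trace.re < (1/2) * (1 - ε) ∧
    xiQ2 ε ρ₀ σ₁ < (1 - ε) / 2 := by
  obtain ⟨hε0, hε1⟩ := hε
  set s : ℝ := Real.sqrt (ε * (1 - ε)) with hsdef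
  set ρ₀ : Matrix (Fin 2) (Fin 2) ℂ := !![1, 0; 0, 0] with hρ
  set σ₁ : Matrix (Fin 2) (Fin 2) ℂ := (1/2 : ℂ) • !![1, 1; 1, 1] with hσ
  set A' : Matrix (Fin 2) (Fin 2) ℂ := !![((1 - ε : ℝ) : ℂ), ((-s : ℝ) : ℂ); ((-s : ℝ) : ℂ), ((ε : ℝ) : ℂ)] with hA'
  have hε1' : ε < 1 := by linarith
  set a : ℝ := Real.sqrt (1 - ε) with ha
  set b : ℝ := Real.sqrt ε with hb
  have haa : a * a = 1 - ε := Real.mul_self_sqrt (by linarith)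
  have hbb : b * b = ε := Real.mul_self_sqrt hε0.le
  have hab : b * a = s := by
    rw [ha, hb, hsdef, ← Real.sqrt_mul hε0.le]
  have hs0 : 0 ≤ s := hsdef ▸ Real.sqrt_nonneg _
  have hA : A' = (!![(a:ℂ), (-b:ℝ); 0, 0])ᴴ * (!![(a:ℂ), (-b:ℝ); 0, 0]) := by
    rw [hA']; ext i j
    fin_cases i <;> fin_cases j <;>
      simp [Matrix.mul_apply, Fin.sum_univ_two, ← Complex.ofReal_mul, haa, hbb,
        mul_comm a b, hab]
  have hIA : (1 : Matrix (Fin 2) (Fin 2) ℂ) - A' =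
      (!![(b:ℂ), (a:ℝ); 0, 0])ᴴ * (!![(b:ℂ), (a:ℝ); 0, 0]) := by
    rw [hA']; ext i j
    fin_cases i <;> fin_cases j <;>
      simp [Matrix.mul_apply, Fin.sum_univ_two, Matrix.one_apply, ← Complex.ofReal_mul,
        haa, hbb, hab] <;> (try (rw [mul_comm]; exact hab.symm))
  have hApsd : A'.PosSemidef := hA ▸ Matrix.posSemidef_conjTranspose_mul_self _
  have hIApsd : ((1:Matrix (Fin 2) (Fin 2) ℂ) - A').PosSemidef :=
    hIA ▸ Matrix.posSemidef_conjTranspose_mul_self _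
  have htr1 : (ρ₀ * A').trace.re = 1 - ε := by
    simp [hρ, hA', Matrix.trace, Matrix.mul_apply, Fin.sum_univ_two]
  have htr2 : (σ₁ * A').trace.re = (1/2) * (1 - 2 * s) := by
    simp [hσ, hA', Matrix.trace, Matrix.mul_apply, Fin.sum_univ_two, Complex.add_re,
      Complex.mul_re]
    ring
  have hεs : ε < 2 * s := by
    have h : ε / 2 < s := by
      rw [hsdef, show ε / 2 < Real.sqrt (ε * (1 - ε)) ↔ (ε/2)^2 < ε * (1-ε) from
        Real.lt_sqrt (by linarith)]
      nlinarith
    linarith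
  have hlt : (σ₁ * A').trace.re < (1/2) * (1 - ε) := by
    rw [htr2]; linarith
  refine ⟨hApsd, hIApsd, htr1, htr2, hlt, ?_⟩
  have hmem : (σ₁ * A').trace.re ∈ {r : ℝ | ∃ A : Matrix (Fin 2) (Fin 2) ℂ,
      A.PosSemidef ∧ (1 - A).PosSemidef ∧ 1 - ε ≤ (ρ₀ * A).trace.re ∧
      r = (σ₁ * A).trace.re} :=
    ⟨A', hApsd, hIApsd, by rw [htr1], rfl⟩
  have hbdd : BddBelow {r : ℝ | ∃ A : Matrix (Fin 2) (Fin 2) ℂ,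
      A.PosSemidef ∧ (1 - A).PosSemidef ∧ 1 - ε ≤ (ρ₀ * A).trace.re ∧
      r = (σ₁ * A).trace.re} := by
    refine ⟨0, fun r hr => ?_⟩
    obtain ⟨A, hA1, _, _, rfl⟩ := hr
    have h := hA1.dotProduct_mulVec_nonneg ![1, 1]
    have h2 : (0:ℝ) ≤ (dotProduct (star ![1, 1]) (A.mulVec ![1, 1])).re := by
      rw [Complex.le_def] at h
      simpa using h.1
    have heq : (σ₁ * A).trace.re
        = (1/2) * (dotProduct (star ![1, 1]) (A.mulVec ![1, 1])).re := by
      simp [hσ, Matrix.trace, Matrix.mul_apply, dotProduct, Matrix.mulVec,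
        Matrix.vecMul, Fin.sum_univ_two, Complex.add_re, Complex.mul_re]
      ring
    rw [heq]; linarith
  calc xiQ2 ε ρ₀ σ₁ ≤ (σ₁ * A').trace.re := csInf_le hbdd hmem
    _ < (1 - ε) / 2 := by rw [htr2]; linarith
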